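/- Pruning decreases branch orders by one: for any binary tree T and any k ≥ 2, the number of Horton-Strahler branches of order k in T equals the number of branches of order k−1 in R(T), i.e., N_k[T] = N_{k−1}[R(T)]. -/

import Mathlib

/-- Finite rooted full (reduced) binary trees: either a leaf or an internal
vertex with two children. -/
inductive BTree : Type
  | leaf : BTree
  | node : BTree → BTree → BTree

namespace BTree

/-- Horton–Strahler order: leaves have order 1 and an internal vertex with
children of orders `i, j` has order `max i j + δ_{ij}`. -/
def hs : BTree → ℕ
  | leaf => 1
  | node l r => max (hs l) (hs r) + (if hs l = hs r then 1 else 0)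

/-- Pruning: remove the leaves and their parental edges, then apply series
reduction.  The result is `none` when the whole tree is eliminated
(i.e. for the single-leaf tree). -/
def prune : BTree → Option BTree
  | leaf => none
  | node l r =>
    match prune l, prune r with
    | none, none => some leaf
    | none, some r' => some r'
    | some l', none => some l'
    | some l', some r' => some (node l' r')

/-- `branches k t` is the number `N_k[t]` of Horton–Strahler branches of
order `k` in `t`: the number of order-`k` vertices having no child of order
`k` (each branch, a maximal chain of same-order vertices, is counted at its
lowest vertex). -/
def branches (k : ℕ) : BTree → ℕ
  | leaf => if k = 1 then 1 else 0
  | node l r =>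
      branches k l + branches k r +
        (if hs (node l r) = k ∧ hs l = hs r then 1 else 0)

end BTree

namespace BTree

lemma one_le_hs : ∀ t, 1 ≤ hs t
  | leaf => le_refl _
  | node l r => by
    simp only [hs]
    have := Nat.le_max_left (hs l) (hs r)
    have := one_le_hs l
    omega

lemma two_le_hs_node (l r : BTree) : 2 ≤ hs (node l r) := by
  have h1 := one_le_hs l
  have h2 := one_le_hs r
  simp only [hs]
  by_cases h : hs l = hs r
  · rw [if_pos h]
    have := Nat.le_max_right (hs l) (hs r)
    omega
  · rw [if_neg h]
    rcases Nat.le_total (hs l) (hs r) with hle | hle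
    · rw [Nat.max_eq_right hle]; omega
    · rw [Nat.max_eq_left hle]; omega

lemma prune_node_isSome (l r : BTree) : (prune (node l r)).isSome := by
  cases h1 : prune l <;> cases h2 : prune r <;> simp [prune, h1, h2]

lemma eq_leaf_of_prune_eq_none {t : BTree} (h : prune t = none) : t = leaf := by
  cases t with
  | leaf => rfl
  | node l r => have := prune_node_isSome l r; rw [h] at this; simp at this

lemma two_le_hs_of_prune {t : BTree} {t' : BTree} (h : prune t = some t') :
    2 ≤ hs t := by
  cases t with
  | leaf => simp [prune] at h
  | node l r => exact two_le_hs_node l r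

lemma hs_prune : ∀ t t', prune t = some t' → hs t' + 1 = hs t
  | leaf, t', h => by simp [prune] at h
  | node l r, t', h => by
    cases h1 : prune l <;> cases h2 : prune r <;>
      simp only [prune, h1, h2, Option.some.injEq] at h
    · rw [eq_leaf_of_prune_eq_none h1, eq_leaf_of_prune_eq_none h2]
      subst h; simp [hs]
    case none.some r' =>
      subst h
      rw [eq_leaf_of_prune_eq_none h1]
      have hr := hs_prune r _ h2
      have hr2 := two_le_hs_of_prune h2
      simp only [hs]
      rw [Nat.max_eq_right (by omega : (1:ℕ) ≤ hs r)]
      change hs r' + 1 = hs r + if (1:ℕ) = hs r then 1 else 0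
      rw [if_neg (by omega : ¬ (1:ℕ) = hs r)]
      omega
    case some.none l' =>
      subst h
      rw [eq_leaf_of_prune_eq_none h2]
      have hl := hs_prune l _ h1
      have hl2 := two_le_hs_of_prune h1
      simp only [hs]
      rw [Nat.max_eq_left (by omega : (1:ℕ) ≤ hs l)]
      change hs l' + 1 = hs l + if hs l = (1:ℕ) then 1 else 0
      rw [if_neg (by omega : ¬ hs l = 1)]
      omega
    case some.some l' r' =>
      subst h
      have hl := hs_prune l _ h1
      have hr := hs_prune r _ h2
      simp only [hs]
      by_cases h : hs l = hs r
      · rw [if_pos h, if_pos (by omega : hs l' = hs r'), h,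
          (by omega : hs l' = hs r'), Nat.max_self, Nat.max_self]
        omega
      · rw [if_neg h, if_neg (by omega : ¬ hs l' = hs r')]
        rcases lt_or_gt_of_ne h with hlt | hgt
        · rw [Nat.max_eq_right hlt.le,
            Nat.max_eq_right (by omega : hs l' ≤ hs r')]
          omega
        · rw [Nat.max_eq_left hgt.le,
            Nat.max_eq_left (by omega : hs r' ≤ hs l')]
          omega

end BTree

/-- **Pruning decreases branch orders by one:** for any binary tree `t` and
any `k ≥ 2`, the number of branches of order `k` in `t` equals the number of
branches of order `k - 1` in the pruned tree `R(t)` (with the empty tree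
having no branches). -/
theorem stmt_3 (t : BTree) (k : ℕ) (hk : 2 ≤ k) :
    BTree.branches k t = (BTree.prune t).elim 0 (BTree.branches (k - 1)) := by
  induction t with
  | leaf => simp [BTree.branches, BTree.prune]; omega
  | node l r ihl ihr =>
    cases h1 : BTree.prune l <;> cases h2 : BTree.prune r
    · -- both children are leaves
      rw [BTree.eq_leaf_of_prune_eq_none h1, BTree.eq_leaf_of_prune_eq_none h2]
      show BTree.branches k (BTree.node BTree.leaf BTree.leaf) = BTree.branches (k-1) BTree.leaf
      simp only [BTree.branches, BTree.hs, Nat.max_self, and_true]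
      split_ifs <;> omega
    case none.some r' =>
      rw [BTree.eq_leaf_of_prune_eq_none h1]
      have hr2 := BTree.two_le_hs_of_prune h2
      have er : BTree.branches k r = BTree.branches (k - 1) r' := by
        rw [ihr, h2]; rfl
      simp only [BTree.prune, h2, BTree.branches, Option.elim]
      rw [if_neg (by omega : ¬ k = 1), er,
        if_neg (by rintro ⟨-, h⟩; simp only [BTree.hs] at h; omega)]
      omega
    case some.none l' =>
      rw [BTree.eq_leaf_of_prune_eq_none h2]
      have hl2 := BTree.two_le_hs_of_prune h1
      have el : BTree.branches k l = BTree.branches (k - 1) l' := by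
        rw [ihl, h1]; rfl
      simp only [BTree.prune, h1, BTree.branches, Option.elim]
      rw [if_neg (by omega : ¬ k = 1), el,
        if_neg (by rintro ⟨-, h⟩; simp only [BTree.hs] at h; omega)]
      omega
    case some.some l' r' =>
      have hp : BTree.prune (BTree.node l r) = some (BTree.node l' r') := by
        simp [BTree.prune, h1, h2]
      have key := BTree.hs_prune _ _ hp
      have hl := BTree.hs_prune l _ h1
      have hr := BTree.hs_prune r _ h2
      have el : BTree.branches k l = BTree.branches (k - 1) l' := by
        rw [ihl, h1]; rfl
      have er : BTree.branches k r = BTree.branches (k - 1) r' := by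
        rw [ihr, h2]; rfl
      rw [hp]
      simp only [BTree.branches, Option.elim]
      rw [el, er]
      congr 1
      split_ifs with hA hB hB
      · rfl
      · exact absurd ⟨by omega, by omega⟩ hB
      · exact absurd ⟨by omega, by omega⟩ hA
      · rfl
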